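/- Fix an integer d ≥ 1, a point x ∈ ℝ^d with x ≠ 0, and a real number a > 0. Then ψ_λ(x) → 0 uniformly on the strip Ω_a = {λ ∈ ℂ : |Im λ| ≤ a} as |λ| → ∞; that is, for every ε > 0 there exists R > 0 such that |ψ_λ(x)| < ε for every λ ∈ Ω_a with |λ| ≥ R. -/

import Mathlib

open MeasureTheory Complex
open scoped ENNReal

/-- `ψ_λ(ξ) = |B(0,1)|⁻¹ ∫_{B(0,1)} e^{-iλ ξ·y} dy`. -/
noncomputable def psiFn (d : ℕ) (lam : ℂ) (ξ : EuclideanSpace ℝ (Fin d)) : ℂ :=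
  (((volume (Metric.ball (0 : EuclideanSpace ℝ (Fin d)) 1)).toReal : ℂ))⁻¹ *
    ∫ y in Metric.ball (0 : EuclideanSpace ℝ (Fin d)) 1,
      Complex.exp (-(Complex.I * lam * ((inner ℝ ξ y : ℝ) : ℂ)))

open MeasureTheory Complex Filter Metric Topology
open scoped ENNReal Real FourierTransform
set_option maxHeartbeats 1000000

noncomputable section

/-- Lipschitz bound for real exp on a bounded interval. -/
lemma exp_lip {M u v : ℝ} (hu : |u| ≤ M) (hv : |v| ≤ M) :
    |Real.exp u - Real.exp v| ≤ Real.exp M * |u - v| := by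
  have hconv : Convex ℝ (Set.Icc (-M) M) := convex_Icc _ _
  have := hconv.norm_image_sub_le_of_norm_hasDerivWithin_le
    (f' := Real.exp)
    (fun t _ => (Real.hasDerivAt_exp t).hasDerivWithinAt)
    (fun t ht => by
      rw [Real.norm_eq_abs, abs_of_pos (Real.exp_pos t)]
      exact Real.exp_le_exp.2 ht.2)
    (abs_le.1 hv) (abs_le.1 hu)
  simpa [Real.norm_eq_abs] using this

variable {d : ℕ}

/-- The key integral, parametrized by real and imaginary parts of `λ`. -/
def Gint (x : EuclideanSpace ℝ (Fin d)) (τ σ : ℝ) : ℂ :=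
  ∫ y in Metric.ball (0 : EuclideanSpace ℝ (Fin d)) 1,
    Complex.exp (((τ * (inner ℝ x y : ℝ) : ℝ) : ℂ) - Complex.I * ((σ * (inner ℝ x y : ℝ) : ℝ) : ℂ))

lemma inner_bound (x : EuclideanSpace ℝ (Fin d)) {y : EuclideanSpace ℝ (Fin d)}
    (hy : y ∈ Metric.ball (0 : EuclideanSpace ℝ (Fin d)) 1) :
    |(inner ℝ x y : ℝ)| ≤ ‖x‖ := by
  have h1 : |(inner ℝ x y : ℝ)| ≤ ‖x‖ * ‖y‖ := abs_real_inner_le_norm x y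
  have h2 : ‖y‖ ≤ 1 := by
    have := mem_ball_iff_norm.1 hy
    simpa using this.le
  calc |(inner ℝ x y : ℝ)| ≤ ‖x‖ * ‖y‖ := h1
    _ ≤ ‖x‖ * 1 := by gcongr
    _ = ‖x‖ := mul_one _

lemma norm_exp_arg (τ σ c : ℝ) :
    ‖Complex.exp (((τ * c : ℝ) : ℂ) - Complex.I * ((σ * c : ℝ) : ℂ))‖ = Real.exp (τ * c) := by
  rw [Complex.norm_exp]
  congr 1
  simp [Complex.sub_re, Complex.mul_re]

lemma G_integrableOn (x : EuclideanSpace ℝ (Fin d)) (τ σ : ℝ) :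
    IntegrableOn (fun y : EuclideanSpace ℝ (Fin d) =>
      Complex.exp (((τ * (inner ℝ x y : ℝ) : ℝ) : ℂ) - Complex.I * ((σ * (inner ℝ x y : ℝ) : ℝ) : ℂ)))
      (Metric.ball 0 1) volume := by
  apply Measure.integrableOn_of_bounded (M := Real.exp (|τ| * ‖x‖))
  · exact (measure_ball_lt_top).ne
  · refine Continuous.aestronglyMeasurable (Complex.continuous_exp.comp ?_)
    have hci : Continuous fun y : EuclideanSpace ℝ (Fin d) => (inner ℝ x y : ℝ) :=
      continuous_const.inner continuous_id
    exact ((Complex.continuous_ofReal.comp (continuous_const.mul hci)).sub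
      (continuous_const.mul (Complex.continuous_ofReal.comp (continuous_const.mul hci))))
  · filter_upwards [ae_restrict_mem measurableSet_ball] with y hy
    rw [norm_exp_arg]
    apply Real.exp_le_exp.2
    calc τ * (inner ℝ x y : ℝ) ≤ |τ * (inner ℝ x y : ℝ)| := le_abs_self _
      _ = |τ| * |(inner ℝ x y : ℝ)| := abs_mul _ _
      _ ≤ |τ| * ‖x‖ := by gcongr; exact inner_bound x hy

lemma G_tendsto (x : EuclideanSpace ℝ (Fin d)) (hx : x ≠ 0) (τ : ℝ) :
    Tendsto (fun σ => Gint x τ σ) (cocompact ℝ) (𝓝 0) := by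
  classical
  let V := EuclideanSpace ℝ (Fin d)
  have hmap : Tendsto (fun σ : ℝ => (σ / (2 * π)) • x) (cocompact ℝ) (cocompact V) := by
    rw [← cobounded_eq_cocompact, ← Metric.cobounded_eq_cocompact,
      ← tendsto_norm_atTop_iff_cobounded]
    have hnorm : ∀ σ : ℝ, ‖(σ / (2 * π)) • x‖ = |σ| * (‖x‖ / (2 * π)) := by
      intro σ
      rw [norm_smul, Real.norm_eq_abs, abs_div, abs_of_pos Real.two_pi_pos]
      ring
    simp_rw [hnorm]
    exact tendsto_norm_cobounded_atTop.atTop_mul_const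
      (div_pos (norm_pos_iff.2 hx) Real.two_pi_pos)
  have h0 := (tendsto_integral_exp_inner_smul_cocompact
      (f := (Metric.ball (0 : V) 1).indicator
        (fun y => Complex.exp ((τ * (inner ℝ x y : ℝ) : ℝ) : ℂ)))).comp hmap
  have heq : (fun σ : ℝ => ∫ v : V, 𝐞 (-(inner ℝ v ((σ / (2 * π)) • x) : ℝ)) •
      (Metric.ball (0 : V) 1).indicator
        (fun y => Complex.exp ((τ * (inner ℝ x y : ℝ) : ℝ) : ℂ)) v) = fun σ => Gint x τ σ := by
    funext σ
    rw [Gint, ← integral_indicator measurableSet_ball]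
    congr 1
    funext v
    by_cases hv : v ∈ Metric.ball (0 : V) 1
    · rw [Set.indicator_of_mem hv, Set.indicator_of_mem hv]
      set c : ℝ := (inner ℝ x v : ℝ) with hc
      have hinner : (inner ℝ v ((σ / (2 * π)) • x) : ℝ) = σ / (2 * π) * c := by
        rw [real_inner_smul_right, real_inner_comm]
      rw [hinner, Circle.smul_def, Real.fourierChar_apply, smul_eq_mul, ← Complex.exp_add]
      congr 1
      have harg : 2 * π * -(σ / (2 * π) * c) = -(σ * c) := by
        field_simp
      rw [harg]
      push_cast
      ring
    · rw [Set.indicator_of_notMem hv, Set.indicator_of_notMem hv, smul_zero]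
  exact h0.congr fun σ => congrFun heq σ

lemma G_lip (x : EuclideanSpace ℝ (Fin d)) {b : ℝ} {τ τ' : ℝ}
    (hτ : |τ| ≤ b) (hτ' : |τ'| ≤ b) (σ : ℝ) :
    ‖Gint x τ σ - Gint x τ' σ‖ ≤
      (Real.exp (b * ‖x‖) * ‖x‖ * |τ - τ'|) *
        (volume (Metric.ball (0 : EuclideanSpace ℝ (Fin d)) 1)).toReal := by
  rw [Gint, Gint, ← integral_sub (G_integrableOn x τ σ) (G_integrableOn x τ' σ)]
  apply norm_setIntegral_le_of_norm_le_const_ae' measure_ball_lt_top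
  refine Eventually.of_forall fun y hy => ?_
  set c : ℝ := (inner ℝ x y : ℝ) with hc
  have hcb : |c| ≤ ‖x‖ := inner_bound x hy
  have key : ∀ s : ℝ, Complex.exp (((s * c : ℝ) : ℂ) - Complex.I * ((σ * c : ℝ) : ℂ)) =
      Complex.exp ((s * c : ℝ) : ℂ) / Complex.exp (Complex.I * ((σ * c : ℝ) : ℂ)) := by
    intro s; rw [Complex.exp_sub]
  rw [key τ, key τ', div_sub_div_same, norm_div]
  have hden : ‖Complex.exp (Complex.I * ((σ * c : ℝ) : ℂ))‖ = 1 := by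
    rw [Complex.norm_exp]
    simp [Complex.mul_re]
  rw [hden, div_one]
  have hreal : ∀ s : ℝ, Complex.exp ((s : ℝ) : ℂ) = ((Real.exp s : ℝ) : ℂ) := by
    intro s; rw [Complex.ofReal_exp]
  rw [hreal (τ * c), hreal (τ' * c), ← Complex.ofReal_sub, Complex.norm_real, Real.norm_eq_abs]
  have h1 : |Real.exp (τ * c) - Real.exp (τ' * c)| ≤ Real.exp (b * ‖x‖) * |τ * c - τ' * c| := by
    apply exp_lip
    · calc |τ * c| = |τ| * |c| := abs_mul _ _
        _ ≤ b * ‖x‖ := mul_le_mul hτ hcb (abs_nonneg _) ((abs_nonneg τ).trans hτ)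
    · calc |τ' * c| = |τ'| * |c| := abs_mul _ _
        _ ≤ b * ‖x‖ := mul_le_mul hτ' hcb (abs_nonneg _) ((abs_nonneg τ').trans hτ')
  have h2 : |τ * c - τ' * c| = |τ - τ'| * |c| := by
    rw [← sub_mul, abs_mul]
  calc |Real.exp (τ * c) - Real.exp (τ' * c)| ≤ Real.exp (b * ‖x‖) * (|τ - τ'| * |c|) := by
        rw [← h2]; exact h1
    _ ≤ Real.exp (b * ‖x‖) * (|τ - τ'| * ‖x‖) := by gcongr
    _ = Real.exp (b * ‖x‖) * ‖x‖ * |τ - τ'| := by ring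

lemma G_unif (x : EuclideanSpace ℝ (Fin d)) (hx : x ≠ 0) (a : ℝ) (ha : 0 < a)
    (ε : ℝ) (hε : 0 < ε) :
    ∃ S : ℝ, 0 ≤ S ∧ ∀ τ : ℝ, |τ| ≤ a → ∀ σ : ℝ, S ≤ |σ| → ‖Gint x τ σ‖ < ε := by
  set C : ℝ := Real.exp ((a + 1) * ‖x‖) * ‖x‖ *
    (volume (Metric.ball (0 : EuclideanSpace ℝ (Fin d)) 1)).toReal with hC
  have hC0 : 0 ≤ C := by positivity
  set δ : ℝ := min (ε / (2 * (C + 1))) 1 with hδ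
  have hδ0 : 0 < δ := lt_min (by positivity) one_pos
  have hδ1 : δ ≤ 1 := min_le_right _ _
  have hδC : C * δ ≤ ε / 2 := by
    have h1 : δ ≤ ε / (2 * (C + 1)) := min_le_left _ _
    calc C * δ ≤ C * (ε / (2 * (C + 1))) := by gcongr
      _ ≤ (C + 1) * (ε / (2 * (C + 1))) := by gcongr; linarith
      _ = ε / 2 := by field_simp
  obtain ⟨t, ht⟩ := isCompact_Icc.elim_finite_subcover (fun τ0 : ℝ => Metric.ball τ0 δ)
    (fun _ => isOpen_ball) (fun τ hτ => Set.mem_iUnion.2 ⟨τ, mem_ball_self hδ0⟩)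
    (s := Set.Icc (-a) a)
  have hev : ∀ᶠ σ in cocompact ℝ, ∀ τ0 ∈ t, ‖Gint x τ0 σ‖ < ε / 2 := by
    rw [eventually_all_finset]
    intro τ0 _
    have := Metric.tendsto_nhds.1 (G_tendsto x hx τ0) (ε / 2) (half_pos hε)
    filter_upwards [this] with σ hσ
    rwa [dist_zero_right] at hσ
  rw [← Metric.cobounded_eq_cocompact] at hev
  obtain ⟨S0, -, hS0⟩ := Filter.hasBasis_cobounded_norm.eventually_iff.1 hev
  refine ⟨max S0 0, le_max_right _ _, fun τ hτ σ hσ => ?_⟩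
  have hτIcc : τ ∈ Set.Icc (-a) a := by
    rcases abs_le.1 hτ with ⟨h1, h2⟩; exact ⟨h1, h2⟩
  obtain ⟨τ0, hτ0t, hτball⟩ := Set.mem_iUnion₂.1 (ht hτIcc)
  have hdist : |τ - τ0| < δ := by
    have := mem_ball_iff_norm.1 hτball
    simpa [Real.norm_eq_abs] using this
  have hτ0 : |τ0| ≤ a + 1 := by
    calc |τ0| = |τ + (τ0 - τ)| := by congr 1; ring
      _ ≤ |τ| + |τ0 - τ| := abs_add_le _ _
      _ = |τ| + |τ - τ0| := by rw [abs_sub_comm]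
      _ ≤ a + 1 := add_le_add hτ (hdist.le.trans hδ1)
  have hτa1 : |τ| ≤ a + 1 := hτ.trans (by linarith)
  have hlip : ‖Gint x τ σ - Gint x τ0 σ‖ ≤ C * |τ - τ0| := by
    have := G_lip x hτa1 hτ0 σ
    calc ‖Gint x τ σ - Gint x τ0 σ‖ ≤ Real.exp ((a + 1) * ‖x‖) * ‖x‖ * |τ - τ0| *
        (volume (Metric.ball (0 : EuclideanSpace ℝ (Fin d)) 1)).toReal := this
      _ = C * |τ - τ0| := by rw [hC]; ring
  have hmem : σ ∈ {x : ℝ | S0 ≤ ‖x‖} := by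
    simp only [Set.mem_setOf_eq, Real.norm_eq_abs]
    exact le_trans (le_max_left S0 0) hσ
  have hsmall : ‖Gint x τ0 σ‖ < ε / 2 := hS0 hmem τ0 hτ0t
  calc ‖Gint x τ σ‖ = ‖Gint x τ0 σ + (Gint x τ σ - Gint x τ0 σ)‖ := by
        congr 1; ring
    _ ≤ ‖Gint x τ0 σ‖ + ‖Gint x τ σ - Gint x τ0 σ‖ := norm_add_le _ _
    _ ≤ ‖Gint x τ0 σ‖ + C * |τ - τ0| := by gcongr
    _ < ε / 2 + C * δ :=
        add_lt_add_of_lt_of_le hsmall (mul_le_mul_of_nonneg_left hdist.le hC0)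
    _ ≤ ε / 2 + ε / 2 := by linarith
    _ = ε := add_halves ε

end

open MeasureTheory Complex
open scoped ENNReal

/-- For fixed `x ≠ 0` and `a > 0`, `ψ_λ(x) → 0` uniformly on the strip `|Im λ| ≤ a`
as `|λ| → ∞`. -/
theorem statement4 (d : ℕ) (hd : 1 ≤ d) (x : EuclideanSpace ℝ (Fin d)) (hx : x ≠ 0)
    (a : ℝ) (ha : 0 < a) :
    ∀ ε : ℝ, 0 < ε → ∃ R : ℝ, 0 < R ∧
      ∀ lam : ℂ, |lam.im| ≤ a → R ≤ ‖lam‖ → ‖psiFn d lam x‖ < ε := by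
  intro ε hε
  set vol : ℝ := (volume (Metric.ball (0 : EuclideanSpace ℝ (Fin d)) 1)).toReal with hvol
  have hvolpos : 0 < vol := by
    rw [hvol]
    exact ENNReal.toReal_pos (measure_ball_pos volume 0 one_pos).ne' measure_ball_lt_top.ne
  obtain ⟨S, hS0, hS⟩ := G_unif x hx a ha (ε * vol) (by positivity)
  refine ⟨Real.sqrt (S ^ 2 + a ^ 2), Real.sqrt_pos.2 (by positivity), fun lam him habs => ?_⟩
  set τ := lam.im
  set σ := lam.re
  have hσ : S ≤ |σ| := by
    have h1 : S ^ 2 + a ^ 2 ≤ ‖lam‖ ^ 2 := by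
      have := Real.sqrt_le_sqrt (le_of_eq rfl : S ^ 2 + a ^ 2 ≤ S ^ 2 + a ^ 2)
      calc S ^ 2 + a ^ 2 = Real.sqrt (S ^ 2 + a ^ 2) ^ 2 := by
            rw [Real.sq_sqrt (by positivity)]
        _ ≤ ‖lam‖ ^ 2 := by
            apply pow_le_pow_left₀ (Real.sqrt_nonneg _) habs
    have h2 : ‖lam‖ ^ 2 = σ ^ 2 + τ ^ 2 := by
      rw [Complex.sq_norm, Complex.normSq_apply]; ring
    have h3 : S ^ 2 ≤ σ ^ 2 := by
      have hτ2 : τ ^ 2 ≤ a ^ 2 := by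
        rw [← _root_.sq_abs τ]
        apply pow_le_pow_left₀ (abs_nonneg _) him
      nlinarith
    calc S = Real.sqrt (S ^ 2) := (Real.sqrt_sq hS0).symm
      _ ≤ Real.sqrt (σ ^ 2) := Real.sqrt_le_sqrt h3
      _ = |σ| := Real.sqrt_sq_eq_abs σ
  have hG := hS τ him σ hσ
  have hint : ∀ y : EuclideanSpace ℝ (Fin d),
      Complex.exp (-(Complex.I * lam * ((inner ℝ x y : ℝ) : ℂ))) =
      Complex.exp (((τ * (inner ℝ x y : ℝ) : ℝ) : ℂ) -
        Complex.I * ((σ * (inner ℝ x y : ℝ) : ℝ) : ℂ)) := by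
    intro y
    congr 1
    have hlam : lam = (σ : ℂ) + (τ : ℂ) * Complex.I := (Complex.re_add_im lam).symm
    rw [hlam]
    push_cast
    ring_nf
    rw [Complex.I_sq]
    ring
  have hIeq : (∫ y in Metric.ball (0 : EuclideanSpace ℝ (Fin d)) 1,
      Complex.exp (-(Complex.I * lam * ((inner ℝ x y : ℝ) : ℂ)))) = Gint x τ σ := by
    rw [Gint]
    exact setIntegral_congr_fun measurableSet_ball fun y _ => hint y
  have hpsi : psiFn d lam x = ((vol : ℝ) : ℂ)⁻¹ * Gint x τ σ := by
    rw [psiFn, hIeq]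
  rw [hpsi, norm_mul, norm_inv, Complex.norm_real, Real.norm_eq_abs, abs_of_pos hvolpos]
  calc vol⁻¹ * ‖Gint x τ σ‖ < vol⁻¹ * (ε * vol) := by
        apply mul_lt_mul_of_pos_left hG (inv_pos.2 hvolpos)
    _ = ε := by field_simp
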